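/- arXiv:1103.1750 — 3 statements merged into one kernel-verified Lean document; each statement's English description precedes it below -/
import Mathlib

section
/- Positive definiteness of the forest-interpolated covariance: let 𝔽 be a forest on a finite set 𝒪 and w ∈ [0,1]^{L(𝔽)}. Define the symmetric matrix Z(w) ∈ ℝ^{𝒪×𝒪} by Z(w)_{o,o} = 1 for every o, and for o ≠ o', Z(w)_{o,o'} = the minimum of the w_ℓ along the unique path in 𝔽 from o to o' if o and o' lie in the same connected component of 𝔽, and Z(w)_{o,o'} = 0 otherwise. Then Z(w) is positive semidefinite; consequently, for every positive semidefinite matrix C ∈ ℝ^{𝒪×𝒪}, the entrywise (Hadamard) product (Z(w)_{o,o'} · C_{o,o'})_{o,o'∈𝒪} is positive semidefinite. -/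
open MeasureTheory SimpleGraph in
private lemma aux_indicator_integral (m : ℝ) (h0 : 0 ≤ m) (h1 : m ≤ 1) :
    ∫ t in (0:ℝ)..1, (if t ≤ m then (1:ℝ) else 0) = m := by
  have h : (fun t : ℝ => if t ≤ m then (1:ℝ) else 0)
      = Set.indicator {x : ℝ | x ≤ m} (fun _ => (1:ℝ)) := by
    funext t
    by_cases ht : t ≤ m <;> simp [Set.indicator, ht]
  rw [h, intervalIntegral.integral_indicator (Set.mem_Icc.2 ⟨h0, h1⟩)]
  simp

open MeasureTheory in
private lemma aux_indicator_integrable (m : ℝ) :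
    IntervalIntegrable (fun t : ℝ => if t ≤ m then (1:ℝ) else 0) volume 0 1 := by
  have h : (fun t : ℝ => if t ≤ m then (1:ℝ) else 0)
      = Set.indicator {x : ℝ | x ≤ m} (fun _ => (1:ℝ)) := by
    funext t
    by_cases ht : t ≤ m <;> simp [Set.indicator, ht]
  rw [h, intervalIntegrable_iff]
  exact (MeasureTheory.integrableOn_const (by
    rw [Set.uIoc_of_le zero_le_one, Real.volume_Ioc]
    exact ENNReal.ofReal_ne_top)).indicator
    measurableSet_Iic

/-- The graph of edges of `F` with weight at least `t`. -/
private def auxG {V : Type} (F : Finset (Sym2 V)) (w : Sym2 V → ℝ) (t : ℝ) :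
    SimpleGraph V :=
  SimpleGraph.fromEdgeSet {e | e ∈ F ∧ t ≤ w e}

open Classical in
/-- Indicator of reachability in `auxG F w t`. -/
private noncomputable def auxf {V : Type} (F : Finset (Sym2 V)) (w : Sym2 V → ℝ)
    (o o' : V) (t : ℝ) : ℝ :=
  if (auxG F w t).Reachable o o' then 1 else 0

open SimpleGraph in
private lemma aux_reach_iff {V : Type} [DecidableEq V] (F : Finset (Sym2 V)) (w : Sym2 V → ℝ)
    {o o' : V} (h : o ≠ o') {m : ℝ}
    (hm : ∀ p : (fromEdgeSet (F : Set (Sym2 V))).Walk o o', p.IsPath →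
      IsLeast {x : ℝ | ∃ e ∈ p.edges, x = w e} m)
    (hr : (fromEdgeSet (F : Set (Sym2 V))).Reachable o o') (t : ℝ) :
    (auxG F w t).Reachable o o' ↔ t ≤ m := by
  constructor
  · rintro ⟨q⟩
    have hsub : ∀ e ∈ q.edges, e ∈ (fromEdgeSet (F : Set (Sym2 V))).edgeSet := by
      intro e he
      have h1 := q.edges_subset_edgeSet he
      unfold auxG at h1
      rw [edgeSet_fromEdgeSet] at h1
      rw [edgeSet_fromEdgeSet]
      exact ⟨h1.1.1, h1.2⟩
    set p := (q.transfer _ hsub).toPath with hp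
    have hmem := (hm p.1 p.2).1
    obtain ⟨e0, he0, hme0⟩ := hmem
    have he0q : e0 ∈ q.edges := by
      have := (q.transfer _ hsub).edges_toPath_subset he0
      rwa [SimpleGraph.Walk.edges_transfer] at this
    have := q.edges_subset_edgeSet he0q
    unfold auxG at this
    rw [edgeSet_fromEdgeSet] at this
    rw [hme0]
    exact this.1.2
  · intro htm
    obtain ⟨q⟩ := hr
    set p := q.toPath with hp
    have hleast := hm p.1 p.2
    have hsub : ∀ e ∈ (p.1 : (fromEdgeSet (F : Set (Sym2 V))).Walk o o').edges,
        e ∈ (auxG F w t).edgeSet := by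
      intro e he
      have h1 := (p.1).edges_subset_edgeSet he
      rw [edgeSet_fromEdgeSet] at h1
      unfold auxG
      rw [edgeSet_fromEdgeSet]
      refine ⟨⟨h1.1, ?_⟩, h1.2⟩
      exact le_trans htm (hleast.2 ⟨e, he, rfl⟩)
    exact ⟨(p.1).transfer _ hsub⟩

/-- Positive definiteness of the forest-interpolated covariance: let `F` be a forest on a
finite set, `w ∈ [0,1]^{L(F)}`, and let `A` be the matrix with `A o o = 1`, `A o o' = ` the
minimum of `w` along the unique path in `F` from `o` to `o'` when they are connected, and
`A o o' = 0` otherwise.  Then `A` is positive semidefinite, and the Hadamard product of `A`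
with any positive semidefinite matrix `C` is positive semidefinite. -/
theorem forest_interpolated_covariance_posSemidef
    {V : Type} [Fintype V] [DecidableEq V]
    (F : Finset (Sym2 V))
    (hF : (SimpleGraph.fromEdgeSet (F : Set (Sym2 V))).IsAcyclic)
    (w : Sym2 V → ℝ) (hw : ∀ e ∈ F, w e ∈ Set.Icc (0:ℝ) 1)
    (A : Matrix V V ℝ)
    (hdiag : ∀ o : V, A o o = 1)
    (hmin : ∀ o o' : V, o ≠ o' →
      ∀ p : (SimpleGraph.fromEdgeSet (F : Set (Sym2 V))).Walk o o', p.IsPath →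
        IsLeast {x : ℝ | ∃ e ∈ p.edges, x = w e} (A o o'))
    (hzero : ∀ o o' : V, o ≠ o' →
      ¬ (SimpleGraph.fromEdgeSet (F : Set (Sym2 V))).Reachable o o' → A o o' = 0) :
    A.PosSemidef ∧
      ∀ C : Matrix V V ℝ, C.PosSemidef →
        (Matrix.of fun o o' => A o o' * C o o').PosSemidef := by
  classical
  set G : SimpleGraph V := SimpleGraph.fromEdgeSet (F : Set (Sym2 V)) with hG
  -- the subgraphs are subgraphs of G
  have hHG : ∀ t, auxG F w t ≤ G := by
    intro t
    exact SimpleGraph.fromEdgeSet_mono (fun e he => he.1)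
  -- key facts about auxf
  have hcases : ∀ o o' : V, IntervalIntegrable (auxf F w o o') MeasureTheory.volume 0 1 ∧
      (∫ t in (0:ℝ)..1, auxf F w o o' t) = A o o' := by
    intro o o'
    by_cases he : o = o'
    · subst he
      have hf : auxf F w o o = fun _ : ℝ => (1:ℝ) := by
        funext t
        simp only [auxf, if_pos (SimpleGraph.Reachable.refl (G := auxG F w t) o)]
      rw [hf, hdiag]
      exact ⟨intervalIntegrable_const, by simp⟩
    · by_cases hr : G.Reachable o o'
      · -- connected case
        have hiff := aux_reach_iff F w he (hmin o o' he) hr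
        have hf : auxf F w o o' = fun t : ℝ => if t ≤ A o o' then (1:ℝ) else 0 := by
          funext t
          simp only [auxf]
          by_cases ht : t ≤ A o o'
          · rw [if_pos ((hiff t).2 ht), if_pos ht]
          · rw [if_neg (fun hreach => ht ((hiff t).1 hreach)), if_neg ht]
        -- bounds on A o o'
        obtain ⟨q⟩ := hr
        set p := q.toPath with hp
        obtain ⟨e0, he0, hme0⟩ := (hmin o o' he p.1 p.2).1
        have he0F : e0 ∈ F := by
          have := (p.1).edges_subset_edgeSet he0
          rw [hG, SimpleGraph.edgeSet_fromEdgeSet] at this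
          exact this.1
        have hbounds := hw e0 he0F
        rw [hf]
        exact ⟨aux_indicator_integrable _,
          by rw [aux_indicator_integral _ (hme0 ▸ hbounds.1) (hme0 ▸ hbounds.2)]⟩
      · -- disconnected case
        have hf : auxf F w o o' = fun _ : ℝ => (0:ℝ) := by
          funext t
          simp only [auxf, if_neg (fun hreach : (auxG F w t).Reachable o o' =>
            hr (hreach.mono (hHG t)))]
        rw [hf, hzero o o' he hr]
        exact ⟨intervalIntegrable_const, by simp⟩
  -- pointwise nonnegativity of the quadratic form of the reachability kernel against C
  have hPSDt : ∀ (C : Matrix V V ℝ), C.PosSemidef → ∀ (t : ℝ) (x : V → ℝ),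
      0 ≤ ∑ o : V, ∑ o' : V, (x o * C o o' * x o') * auxf F w o o' t := by
    intro C hC t x
    set H := auxG F w t with hH
    haveI : Fintype H.ConnectedComponent := inferInstance
    have hrw : ∀ o o' : V, auxf F w o o' t =
        ∑ c : H.ConnectedComponent,
          (if H.connectedComponentMk o = c then (1:ℝ) else 0) *
          (if H.connectedComponentMk o' = c then (1:ℝ) else 0) := by
      intro o o'
      simp only [ite_mul, one_mul, zero_mul]
      rw [Finset.sum_ite_eq (Finset.univ) (H.connectedComponentMk o)
        (fun c => if H.connectedComponentMk o' = c then (1:ℝ) else 0)]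
      simp only [Finset.mem_univ, if_true, auxf]
      by_cases hreach : H.Reachable o o'
      · rw [if_pos hreach, if_pos ((SimpleGraph.ConnectedComponent.eq).2 hreach).symm]
      · rw [if_neg hreach, if_neg (fun hcc =>
          hreach ((SimpleGraph.ConnectedComponent.eq).1 hcc.symm))]
    have hflip : ∑ o : V, ∑ o' : V, (x o * C o o' * x o') * auxf F w o o' t
        = ∑ c : H.ConnectedComponent,
            ∑ o : V, ∑ o' : V,
              (if H.connectedComponentMk o = c then x o else 0) *
              (C o o' * (if H.connectedComponentMk o' = c then x o' else 0)) := by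
      have swap3 : ∀ f : V → V → H.ConnectedComponent → ℝ,
          ∑ o : V, ∑ o' : V, ∑ c : H.ConnectedComponent, f o o' c
            = ∑ c : H.ConnectedComponent, ∑ o : V, ∑ o' : V, f o o' c := by
        intro f
        calc ∑ o : V, ∑ o' : V, ∑ c : H.ConnectedComponent, f o o' c
            = ∑ o : V, ∑ c : H.ConnectedComponent, ∑ o' : V, f o o' c :=
              Finset.sum_congr rfl (fun o _ => Finset.sum_comm)
          _ = ∑ c : H.ConnectedComponent, ∑ o : V, ∑ o' : V, f o o' c := Finset.sum_comm
      simp only [hrw, Finset.mul_sum]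
      rw [swap3]
      refine Finset.sum_congr rfl (fun c _ => ?_)
      refine Finset.sum_congr rfl (fun o _ => ?_)
      refine Finset.sum_congr rfl (fun o' _ => ?_)
      by_cases h1 : H.connectedComponentMk o = c <;>
        by_cases h2 : H.connectedComponentMk o' = c <;>
        simp [h1, h2, mul_assoc]
    rw [hflip]
    refine Finset.sum_nonneg (fun c _ => ?_)
    have := hC.dotProduct_mulVec_nonneg (fun o => if H.connectedComponentMk o = c then x o else 0)
    simpa [dotProduct, Matrix.mulVec, Finset.mul_sum] using this
  -- the general Hadamard statement
  have main : ∀ C : Matrix V V ℝ, C.PosSemidef →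
      (Matrix.of fun o o' => A o o' * C o o').PosSemidef := by
    intro C hC
    refine Matrix.PosSemidef.of_dotProduct_mulVec_nonneg ?_ ?_
    · -- Hermitian
      have hAsymm : ∀ o o' : V, A o' o = A o o' := by
        intro o o'
        rw [← (hcases o o').2, ← (hcases o' o).2]
        have : auxf F w o' o = auxf F w o o' := by
          funext t
          simp only [auxf]
          by_cases hreach : (auxG F w t).Reachable o o'
          · rw [if_pos hreach, if_pos hreach.symm]
          · rw [if_neg hreach, if_neg (fun hx => hreach hx.symm)]
        rw [this]
      have hCsymm : ∀ o o' : V, C o' o = C o o' := by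
        intro o o'
        have := congrFun (congrFun hC.1 o) o'
        simpa using this
      ext o o'
      simp only [Matrix.conjTranspose_apply, Matrix.of_apply, star_trivial]
      rw [hAsymm o o', hCsymm o o']
    · -- quadratic form
      intro x
      have hexp : dotProduct (star x) (Matrix.mulVec (Matrix.of fun o o' => A o o' * C o o') x)
          = ∑ o : V, ∑ o' : V, (x o * C o o' * x o') * A o o' := by
        simp only [dotProduct, Matrix.mulVec, Matrix.of_apply, star_trivial,
          Finset.mul_sum, Pi.star_apply]
        refine Finset.sum_congr rfl (fun o _ => Finset.sum_congr rfl (fun o' _ => ?_))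
        ring
      rw [hexp]
      have hrwint : ∀ o o' : V, (x o * C o o' * x o') * A o o'
          = ∫ t in (0:ℝ)..1, (x o * C o o' * x o') * auxf F w o o' t := by
        intro o o'
        rw [intervalIntegral.integral_const_mul, (hcases o o').2]
      simp only [hrwint]
      have hsumint : ∑ o : V, ∑ o' : V,
          (∫ t in (0:ℝ)..1, (x o * C o o' * x o') * auxf F w o o' t)
          = ∫ t in (0:ℝ)..1, ∑ o : V, ∑ o' : V, (x o * C o o' * x o') * auxf F w o o' t := by
        rw [← Finset.sum_product']
        rw [← intervalIntegral.integral_finset_sum]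
        · congr 1
          funext t
          rw [← Finset.sum_product']
        · intro p _
          exact ((hcases p.1 p.2).1).const_mul _
      rw [hsumint]
      refine intervalIntegral.integral_nonneg zero_le_one (fun t _ => ?_)
      exact hPSDt C hC t x
  refine ⟨?_, main⟩
  -- A is PSD: use the all-ones matrix
  have hJ : (Matrix.of fun (_ _ : V) => (1:ℝ)).PosSemidef := by
    refine Matrix.PosSemidef.of_dotProduct_mulVec_nonneg ?_ ?_
    · ext o o'
      simp [Matrix.conjTranspose_apply]
    · intro x
      have : dotProduct (star x) (Matrix.mulVec (Matrix.of fun (_ _ : V) => (1:ℝ)) x)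
          = (∑ o : V, x o) * (∑ o : V, x o) := by
        simp [dotProduct, Matrix.mulVec, Finset.mul_sum, Finset.sum_mul, mul_comm]
      rw [this]
      exact mul_self_nonneg _
  have := main _ hJ
  have hAeq : (Matrix.of fun (o o' : V) => A o o' * (Matrix.of fun (_ _ : V) => (1:ℝ)) o o') = A := by
    ext o o'
    simp
  rwa [hAeq] at this
end

section
/- Spring factor for secondary fields (covariance form): fix M > 1, β < 1, r ∈ ℕ, j ∈ ℤ, and integers k, k' > j. Let C : ℝ×ℝ → ℝ be twice continuously differentiable and suppose |∂₁∂₂C(v,v')| ≤ K·M^{(2−2β)j}·(1+M^j|v−v'|)^{−r} for all v, v'. For x, y ∈ ℝ let I = Δ^k_x and J = Δ^{k'}_y be the M-adic intervals of scales k and k' containing x and y, and set D(x,y) := C(x,y) − ⨍_I C(u,y) du − ⨍_J C(x,u') du' + ⨍_I ⨍_J C(u,u') du du'. Then there is a constant K' depending only on K, r and M such that |D(x,y)| ≤ K'·M^{−β(k+k')}·M^{−(1−β)(k−j)}·M^{−(1−β)(k'−j)}·(1+M^j|x−y|)^{−r}. (When C is the covariance of a scale-j field ψ^j, D(x,y)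 is the covariance ⟨δ^kψ^j(x) δ^{k'}ψ^j(y)⟩ of the secondary fields.) -/
open MeasureTheory intervalIntegral
open Function

/-- Left endpoint of the `M`-adic interval of scale `k` containing `x`. -/
noncomputable def madicLo (M : ℝ) (k : ℤ) (x : ℝ) : ℝ :=
  (⌊x * M ^ k⌋ : ℝ) * M ^ (-k)

/-- Average of `g` over the `M`-adic interval of scale `k` containing `x`. -/
noncomputable def madicAvg (M : ℝ) (k : ℤ) (x : ℝ) (g : ℝ → ℝ) : ℝ :=
  M ^ k * ∫ u in (madicLo M k x)..(madicLo M k x + M ^ (-k)), g u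

/-- First partial derivative of `C` as a function on the product. -/
noncomputable def sfsfPd1 (C : ℝ → ℝ → ℝ) (p : ℝ × ℝ) : ℝ :=
  fderiv ℝ (Function.uncurry C) p (1, 0)

/-- Mixed partial derivative `∂₂∂₁C`. -/
noncomputable def sfsfPd12 (C : ℝ → ℝ → ℝ) (p : ℝ × ℝ) : ℝ :=
  fderiv ℝ (sfsfPd1 C) p (0, 1)

lemma sfsfPd1_hasDerivAt {C : ℝ → ℝ → ℝ} (hF : ContDiff ℝ 2 (uncurry C)) (s t : ℝ) :
    HasDerivAt (fun v => C v t) (sfsfPd1 C (s, t)) s := by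
  have h1 : HasDerivAt (fun v : ℝ => (v, t)) ((1 : ℝ), (0 : ℝ)) s :=
    (hasDerivAt_id s).prodMk (hasDerivAt_const s t)
  exact ((hF.differentiable (by norm_num)).differentiableAt (x := (s, t))).hasFDerivAt.comp_hasDerivAt s h1

lemma sfsfPd1_contDiff {C : ℝ → ℝ → ℝ} (hF : ContDiff ℝ 2 (uncurry C)) :
    ContDiff ℝ 1 (sfsfPd1 C) :=
  (ContinuousLinearMap.apply ℝ ℝ ((1 : ℝ), (0 : ℝ))).contDiff.comp
    (hF.fderiv_right (m := 1) (by norm_num))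

lemma sfsfPd12_hasDerivAt {C : ℝ → ℝ → ℝ} (hF : ContDiff ℝ 2 (uncurry C)) (s t : ℝ) :
    HasDerivAt (fun t' => sfsfPd1 C (s, t')) (sfsfPd12 C (s, t)) t := by
  have h1 : HasDerivAt (fun t' : ℝ => (s, t')) ((0 : ℝ), (1 : ℝ)) t :=
    (hasDerivAt_const t s).prodMk (hasDerivAt_id t)
  exact (((sfsfPd1_contDiff hF).differentiable one_ne_zero).differentiableAt
    (x := (s, t))).hasFDerivAt.comp_hasDerivAt t h1

lemma sfsfPd12_continuous {C : ℝ → ℝ → ℝ} (hF : ContDiff ℝ 2 (uncurry C)) :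
    Continuous (sfsfPd12 C) :=
  (ContinuousLinearMap.apply ℝ ℝ ((0 : ℝ), (1 : ℝ))).continuous.comp
    ((sfsfPd1_contDiff hF).continuous_fderiv one_ne_zero)

lemma sfsfPd12_eq {C : ℝ → ℝ → ℝ} (hF : ContDiff ℝ 2 (uncurry C)) (v v' : ℝ) :
    deriv (fun u' => deriv (fun u => C u u') v) v' = sfsfPd12 C (v, v') := by
  have h : (fun u' => deriv (fun u => C u u') v) = fun u' => sfsfPd1 C (v, u') := by
    funext u'
    exact (sfsfPd1_hasDerivAt hF v u').deriv
  rw [h]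
  exact (sfsfPd12_hasDerivAt hF v v').deriv

lemma sfsf_ftc1 {C : ℝ → ℝ → ℝ} (hF : ContDiff ℝ 2 (uncurry C)) (x u t : ℝ) :
    C u t - C x t = ∫ s in x..u, sfsfPd1 C (s, t) := by
  refine (integral_eq_sub_of_hasDerivAt (fun s _ => sfsfPd1_hasDerivAt hF s t) ?_).symm
  exact (((sfsfPd1_contDiff hF).continuous).comp
    (continuous_id.prodMk continuous_const)).intervalIntegrable x u

lemma sfsf_ftc2 {C : ℝ → ℝ → ℝ} (hF : ContDiff ℝ 2 (uncurry C)) (s y u' : ℝ) :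
    sfsfPd1 C (s, u') - sfsfPd1 C (s, y) = ∫ t in y..u', sfsfPd12 C (s, t) := by
  refine (integral_eq_sub_of_hasDerivAt (fun t _ => sfsfPd12_hasDerivAt hF s t) ?_).symm
  exact ((sfsfPd12_continuous hF).comp
    (continuous_const.prodMk continuous_id)).intervalIntegrable y u'

lemma sfsf_G_eq {C : ℝ → ℝ → ℝ} (hF : ContDiff ℝ 2 (uncurry C)) (x y u u' : ℝ) :
    C x y - C u y - C x u' + C u u'
      = ∫ s in x..u, ∫ t in y..u', sfsfPd12 C (s, t) := by
  have i1 : IntervalIntegrable (fun s => sfsfPd1 C (s, u')) volume x u :=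
    (((sfsfPd1_contDiff hF).continuous).comp
      (continuous_id.prodMk continuous_const)).intervalIntegrable x u
  have i2 : IntervalIntegrable (fun s => sfsfPd1 C (s, y)) volume x u :=
    (((sfsfPd1_contDiff hF).continuous).comp
      (continuous_id.prodMk continuous_const)).intervalIntegrable x u
  have e : C x y - C u y - C x u' + C u u'
      = (C u u' - C x u') - (C u y - C x y) := by ring
  rw [e, sfsf_ftc1 hF x u u', sfsf_ftc1 hF x u y, ← integral_sub i1 i2]
  exact integral_congr fun s _ => sfsf_ftc2 hF s y u'

lemma sfsf_abs_sub_le {s x u : ℝ} (hs : s ∈ Set.uIcc x u) : |s - x| ≤ |u - x| := by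
  rcases le_total x u with h | h
  · rw [Set.uIcc_of_le h] at hs
    rw [abs_of_nonneg (by linarith [hs.1]), abs_of_nonneg (by linarith)]
    linarith [hs.2]
  · rw [Set.uIcc_of_ge h] at hs
    rw [abs_of_nonpos (by linarith [hs.2]), abs_of_nonpos (by linarith)]
    linarith [hs.1]

lemma sfsf_G_bound {C : ℝ → ℝ → ℝ} (hF : ContDiff ℝ 2 (uncurry C))
    {x y u u' h h' Bd : ℝ} (hBd : 0 ≤ Bd) (hh : 0 ≤ h) (hh' : 0 ≤ h')
    (hu : |u - x| ≤ h) (hu' : |u' - y| ≤ h')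
    (hB : ∀ s t : ℝ, |s - x| ≤ h → |t - y| ≤ h' → |sfsfPd12 C (s, t)| ≤ Bd) :
    |C x y - C u y - C x u' + C u u'| ≤ Bd * h * h' := by
  rw [sfsf_G_eq hF x y u u']
  have hinner : ∀ s : ℝ, |s - x| ≤ h → |∫ t in y..u', sfsfPd12 C (s, t)| ≤ Bd * h' := by
    intro s hs
    calc |∫ t in y..u', sfsfPd12 C (s, t)| ≤ Bd * |u' - y| := by
          rw [← Real.norm_eq_abs]
          apply intervalIntegral.norm_integral_le_of_norm_le_const
          intro t ht
          exact hB s t hs (le_trans (sfsf_abs_sub_le (Set.uIoc_subset_uIcc ht)) hu')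
      _ ≤ Bd * h' := by nlinarith [abs_nonneg (u' - y)]
  calc |∫ s in x..u, ∫ t in y..u', sfsfPd12 C (s, t)| ≤ (Bd * h') * |u - x| := by
        rw [← Real.norm_eq_abs]
        apply intervalIntegral.norm_integral_le_of_norm_le_const
        intro s hs
        exact hinner s (le_trans (sfsf_abs_sub_le (Set.uIoc_subset_uIcc hs)) hu)
    _ ≤ Bd * h * h' := by nlinarith [mul_nonneg (mul_nonneg hBd hh') (sub_nonneg.2 hu)]
set_option maxHeartbeats 1000000 in
/-- Spring factor for secondary fields: if `|∂₁∂₂C(v,v')| ≤ K·M^{(2−2β)j}(1+M^j|v−v'|)^{−r}`,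
then the doubly-averaged difference
`D(x,y) = C(x,y) − ⨍_{Δ^k_x} C(u,y) du − ⨍_{Δ^{k'}_y} C(x,u') du' + ⨍⨍ C(u,u')`
satisfies `|D(x,y)| ≤ K'·M^{−β(k+k')}·M^{−(1−β)(k−j)}·M^{−(1−β)(k'−j)}·(1+M^j|x−y|)^{−r}`
with `K'` depending only on `K, r, M`. -/
theorem secondary_field_spring_factor
    (M : ℝ) (hM : 1 < M) (r : ℕ) (K : ℝ) (hK : 0 ≤ K) :
    ∃ K' : ℝ, 0 < K' ∧
      ∀ (β : ℝ), β < 1 → ∀ (j k k' : ℤ), j < k → j < k' →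
      ∀ C : ℝ → ℝ → ℝ, ContDiff ℝ 2 (Function.uncurry C) →
      (∀ v v' : ℝ,
          |deriv (fun u' => deriv (fun u => C u u') v) v'|
            ≤ K * M ^ ((2 - 2 * β) * (j : ℝ)) / (1 + M ^ j * |v - v'|) ^ r) →
      ∀ x y : ℝ,
        |C x y - madicAvg M k x (fun u => C u y) - madicAvg M k' y (fun u' => C x u')
            + madicAvg M k x (fun u => madicAvg M k' y (fun u' => C u u'))|
          ≤ K' * M ^ (-β * ((k : ℝ) + (k' : ℝ)))
              * M ^ (-(1 - β) * ((k : ℝ) - (j : ℝ)))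
              * M ^ (-(1 - β) * ((k' : ℝ) - (j : ℝ))) / (1 + M ^ j * |x - y|) ^ r := by
  have hM0 : (0 : ℝ) < M := lt_trans one_pos hM
  have hMne : (M : ℝ) ≠ 0 := ne_of_gt hM0
  refine ⟨(K + 1) * 3 ^ r, by positivity, ?_⟩
  intro β hβ j k k' hjk hjk' C hF hC x y
  have hCc : Continuous (Function.uncurry C) := hF.continuous
  have hCu : ∀ t : ℝ, Continuous fun u => C u t := fun t =>
    hCc.comp (continuous_id.prodMk continuous_const)
  have hCt : ∀ s : ℝ, Continuous fun t => C s t := fun s =>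
    hCc.comp (continuous_const.prodMk continuous_id)
  set a := madicLo M k x with ha
  set b := madicLo M k' y with hb
  set h : ℝ := M ^ (-k) with hh
  set h' : ℝ := M ^ (-k') with hh'
  have hhpos : 0 < h := zpow_pos hM0 _
  have hh'pos : 0 < h' := zpow_pos hM0 _
  have hmem : ∀ (m : ℤ) (z : ℝ), madicLo M m z ≤ z ∧ z < madicLo M m z + M ^ (-m) := by
    intro m z
    have h1 : ((⌊z * M ^ m⌋ : ℤ) : ℝ) ≤ z * M ^ m := Int.floor_le _
    have h2 : z * M ^ m < (⌊z * M ^ m⌋ : ℤ) + 1 := Int.lt_floor_add_one _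
    have e : (M : ℝ) ^ m * M ^ (-m) = 1 := by
      rw [← zpow_add₀ hMne]; simp
    have hpm : (0 : ℝ) < M ^ (-m) := zpow_pos hM0 _
    unfold madicLo
    constructor
    · calc ((⌊z * M ^ m⌋ : ℤ) : ℝ) * M ^ (-m) ≤ z * M ^ m * M ^ (-m) :=
            mul_le_mul_of_nonneg_right h1 hpm.le
        _ = z := by rw [mul_assoc, e, mul_one]
    · calc z = z * M ^ m * M ^ (-m) := by rw [mul_assoc, e, mul_one]
        _ < (((⌊z * M ^ m⌋ : ℤ) : ℝ) + 1) * M ^ (-m) := by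
            exact mul_lt_mul_of_pos_right h2 hpm
        _ = ((⌊z * M ^ m⌋ : ℤ) : ℝ) * M ^ (-m) + M ^ (-m) := by ring
  obtain ⟨hax1, hax2⟩ := hmem k x
  obtain ⟨hby1, hby2⟩ := hmem k' y
  rw [← ha] at hax1 hax2
  rw [← hh] at hax2
  rw [← hb] at hby1 hby2
  rw [← hh'] at hby2
  -- the integral identity
  have hinnerId : ∀ u : ℝ, (∫ t in b..b + h', (C x y - C u y - C x t + C u t))
      = (C x y - C u y) * h' - (∫ t in b..b + h', C x t) + ∫ t in b..b + h', C u t := by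
    intro u
    have i0 : IntervalIntegrable (fun _ : ℝ => C x y - C u y) volume b (b + h') :=
      intervalIntegrable_const
    have i1 : IntervalIntegrable (fun t => C x t) volume b (b + h') :=
      (hCt x).intervalIntegrable _ _
    have i2 : IntervalIntegrable (fun t => C u t) volume b (b + h') :=
      (hCt u).intervalIntegrable _ _
    have e : (fun t => C x y - C u y - C x t + C u t)
        = fun t => ((fun _ : ℝ => C x y - C u y) t - C x t) + C u t := by funext t; ring
    rw [e, integral_add (i0.sub i1) i2, integral_sub i0 i1, intervalIntegral.integral_const, smul_eq_mul]
    ring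
  have hkey : (∫ u in a..a + h, ∫ t in b..b + h', (C x y - C u y - C x t + C u t))
      = h * h' * C x y - h' * (∫ u in a..a + h, C u y) - h * (∫ t in b..b + h', C x t)
        + ∫ u in a..a + h, ∫ t in b..b + h', C u t := by
    rw [integral_congr (fun u _ => hinnerId u)]
    have j1 : IntervalIntegrable (fun u => (C x y - C u y) * h') volume a (a + h) :=
      ((continuous_const.sub (hCu y)).mul continuous_const).intervalIntegrable _ _
    have j2 : IntervalIntegrable (fun _ : ℝ => ∫ t in b..b + h', C x t) volume a (a + h) :=
      intervalIntegrable_const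
    have j3 : IntervalIntegrable (fun u => ∫ t in b..b + h', C u t) volume a (a + h) :=
      (intervalIntegral.continuous_parametric_intervalIntegral_of_continuous'
        hCc _ _).intervalIntegrable _ _
    rw [integral_add (j1.sub j2) j3, integral_sub j1 j2, intervalIntegral.integral_mul_const,
      integral_sub intervalIntegrable_const ((hCu y).intervalIntegrable _ _),
      intervalIntegral.integral_const, intervalIntegral.integral_const]
    simp only [smul_eq_mul, add_sub_cancel_left]
    ring
  have e1 : (M : ℝ) ^ k * h = 1 := by rw [hh, ← zpow_add₀ hMne]; simp
  have e2 : (M : ℝ) ^ k' * h' = 1 := by rw [hh', ← zpow_add₀ hMne]; simp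
  have f1 : (M : ℝ) ^ k = h⁻¹ := by rw [hh, zpow_neg, inv_inv]
  have f2 : (M : ℝ) ^ k' = h'⁻¹ := by rw [hh', zpow_neg, inv_inv]
  have hDeq : C x y - madicAvg M k x (fun u => C u y) - madicAvg M k' y (fun u' => C x u')
        + madicAvg M k x (fun u => madicAvg M k' y (fun u' => C u u'))
      = M ^ k * M ^ k'
        * ∫ u in a..a + h, ∫ t in b..b + h', (C x y - C u y - C x t + C u t) := by
    simp only [madicAvg, ← ha, ← hb, ← hh, ← hh']
    rw [hkey]
    rw [intervalIntegral.integral_const_mul]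
    rw [f1, f2]
    field_simp
  -- the pointwise bound on the mixed partial over the relevant region
  have hMj : (0 : ℝ) < M ^ j := zpow_pos hM0 _
  have hP0 : (0 : ℝ) < 1 + M ^ j * |x - y| := by positivity
  have hPpos : (0 : ℝ) < (1 + M ^ j * |x - y|) ^ r := pow_pos hP0 r
  set Bd : ℝ := 3 ^ r * (K * M ^ ((2 - 2 * β) * (j : ℝ))) / (1 + M ^ j * |x - y|) ^ r
    with hBdDef
  have hMrpow : (0 : ℝ) < M ^ ((2 - 2 * β) * (j : ℝ)) := Real.rpow_pos_of_pos hM0 _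
  have hBdnn : 0 ≤ Bd := by positivity
  have hB : ∀ s t : ℝ, |s - x| ≤ h → |t - y| ≤ h' → |sfsfPd12 C (s, t)| ≤ Bd := by
    intro s t hs ht
    have hhj : h ≤ (M : ℝ) ^ (-j) := by
      rw [hh]; exact zpow_le_zpow_right₀ hM.le (by omega)
    have hh'j : h' ≤ (M : ℝ) ^ (-j) := by
      rw [hh']; exact zpow_le_zpow_right₀ hM.le (by omega)
    have emj : (M : ℝ) ^ j * M ^ (-j) = 1 := by rw [← zpow_add₀ hMne]; simp
    have tri : |x - y| ≤ |s - t| + (|s - x| + |t - y|) := by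
      have h1 : |x - y| ≤ |x - s| + |s - y| := abs_sub_le x s y
      have h2 : |s - y| ≤ |s - t| + |t - y| := abs_sub_le s t y
      have h3 : |x - s| = |s - x| := abs_sub_comm x s
      linarith
    have t1 := mul_le_mul_of_nonneg_left tri hMj.le
    have t2 := mul_le_mul_of_nonneg_left (hs.trans hhj) hMj.le
    have t3 := mul_le_mul_of_nonneg_left (ht.trans hh'j) hMj.le
    have t4 : (0 : ℝ) ≤ M ^ j * |s - t| := mul_nonneg hMj.le (abs_nonneg _)
    have hq : 1 + M ^ j * |x - y| ≤ 3 * (1 + M ^ j * |s - t|) := by nlinarith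
    have hQ0 : (0 : ℝ) < 1 + M ^ j * |s - t| := by positivity
    have hQpos : (0 : ℝ) < (1 + M ^ j * |s - t|) ^ r := pow_pos hQ0 r
    have hpow : (1 + M ^ j * |x - y|) ^ r ≤ 3 ^ r * (1 + M ^ j * |s - t|) ^ r := by
      calc (1 + M ^ j * |x - y|) ^ r ≤ (3 * (1 + M ^ j * |s - t|)) ^ r :=
            pow_le_pow_left₀ hP0.le hq r
        _ = 3 ^ r * (1 + M ^ j * |s - t|) ^ r := mul_pow _ _ _
    have hCst := hC s t
    rw [sfsfPd12_eq hF s t] at hCst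
    refine hCst.trans ?_
    rw [hBdDef, div_le_div_iff₀ hQpos hPpos]
    have := mul_le_mul_of_nonneg_left hpow
      (mul_nonneg hK hMrpow.le)
    nlinarith
  -- put everything together
  have hGpt : ∀ u t : ℝ, |u - x| ≤ h → |t - y| ≤ h' →
      |C x y - C u y - C x t + C u t| ≤ Bd * h * h' := fun u t hu ht =>
    sfsf_G_bound hF hBdnn hhpos.le hh'pos.le hu ht hB
  have hmemu : ∀ u ∈ Set.uIoc a (a + h), |u - x| ≤ h := by
    intro u hu
    rw [Set.uIoc_of_le (by linarith : a ≤ a + h)] at hu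
    rw [abs_le]; constructor <;> [linarith [hu.1, hax2]; linarith [hu.2, hax1]]
  have hmemt : ∀ t ∈ Set.uIoc b (b + h'), |t - y| ≤ h' := by
    intro t ht
    rw [Set.uIoc_of_le (by linarith : b ≤ b + h')] at ht
    rw [abs_le]; constructor <;> [linarith [ht.1, hby2]; linarith [ht.2, hby1]]
  have hIntBound : |∫ u in a..a + h, ∫ t in b..b + h', (C x y - C u y - C x t + C u t)|
      ≤ Bd * h * h' * h' * h := by
    rw [← Real.norm_eq_abs]
    calc ‖∫ u in a..a + h, ∫ t in b..b + h', (C x y - C u y - C x t + C u t)‖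
        ≤ (Bd * h * h' * h') * |a + h - a| := by
          apply intervalIntegral.norm_integral_le_of_norm_le_const
          intro u hu
          rw [Real.norm_eq_abs, ← Real.norm_eq_abs]
          calc ‖∫ t in b..b + h', (C x y - C u y - C x t + C u t)‖
              ≤ (Bd * h * h') * |b + h' - b| := by
                apply intervalIntegral.norm_integral_le_of_norm_le_const
                intro t ht
                rw [Real.norm_eq_abs]
                exact hGpt u t (hmemu u hu) (hmemt t ht)
            _ = Bd * h * h' * h' := by rw [add_sub_cancel_left, abs_of_pos hh'pos]
      _ = Bd * h * h' * h' * h := by rw [add_sub_cancel_left, abs_of_pos hhpos]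
  have hDbound : |C x y - madicAvg M k x (fun u => C u y)
        - madicAvg M k' y (fun u' => C x u')
        + madicAvg M k x (fun u => madicAvg M k' y (fun u' => C u u'))|
      ≤ Bd * h * h' := by
    rw [hDeq, abs_mul, abs_mul, abs_of_pos (zpow_pos hM0 k), abs_of_pos (zpow_pos hM0 k')]
    calc (M : ℝ) ^ k * M ^ k'
          * |∫ u in a..a + h, ∫ t in b..b + h', (C x y - C u y - C x t + C u t)|
        ≤ M ^ k * M ^ k' * (Bd * h * h' * h' * h) := by
          apply mul_le_mul_of_nonneg_left hIntBound
          positivity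
      _ = Bd * h * h' := by
          rw [f1, f2]; field_simp
  refine hDbound.trans ?_
  have hA : (M : ℝ) ^ ((2 - 2 * β) * (j : ℝ)) * h * h'
      = M ^ (-β * ((k : ℝ) + (k' : ℝ))) * M ^ (-(1 - β) * ((k : ℝ) - (j : ℝ)))
        * M ^ (-(1 - β) * ((k' : ℝ) - (j : ℝ))) := by
    have hr : ∀ p q : ℝ, (M : ℝ) ^ p * M ^ q = M ^ (p + q) := fun p q =>
      (Real.rpow_add hM0 p q).symm
    rw [hh, hh', ← Real.rpow_intCast M (-k), ← Real.rpow_intCast M (-k'), hr, hr, hr, hr]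
    congr 1
    push_cast
    ring
  have hrw : Bd * h * h'
      = 3 ^ r * K * (M ^ ((2 - 2 * β) * (j : ℝ)) * h * h') / (1 + M ^ j * |x - y|) ^ r := by
    rw [hBdDef]; ring
  rw [hrw, hA]
  set X : ℝ := M ^ (-β * ((k : ℝ) + (k' : ℝ))) * M ^ (-(1 - β) * ((k : ℝ) - (j : ℝ)))
    * M ^ (-(1 - β) * ((k' : ℝ) - (j : ℝ))) with hX
  have hXpos : 0 < X := by
    rw [hX]
    exact mul_pos (mul_pos (Real.rpow_pos_of_pos hM0 _) (Real.rpow_pos_of_pos hM0 _))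
      (Real.rpow_pos_of_pos hM0 _)
  have hfin : 3 ^ r * K * X ≤ (K + 1) * 3 ^ r * X := by
    nlinarith [mul_nonneg (by positivity : (0:ℝ) ≤ (3:ℝ) ^ r) hXpos.le]
  calc 3 ^ r * K * X / (1 + M ^ j * |x - y|) ^ r
      ≤ ((K + 1) * 3 ^ r * X) / (1 + M ^ j * |x - y|) ^ r :=
        div_le_div_of_nonneg_right hfin hPpos.le
    _ = (K + 1) * 3 ^ r * M ^ (-β * ((k : ℝ) + (k' : ℝ)))
        * M ^ (-(1 - β) * ((k : ℝ) - (j : ℝ))) * M ^ (-(1 - β) * ((k' : ℝ) - (j : ℝ)))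
        / (1 + M ^ j * |x - y|) ^ r := by rw [hX]; ring
end

section
/- Wick bound with spatial structure: let S be a countable set, I a set equipped with a projection π : I → S whose fibers π^{−1}(s) are finite, and c : I×I → [0,∞) a symmetric kernel. A partial pairing of I of size N is a set F of N pairwise-disjoint unordered pairs of distinct elements of I; its spatial projection is the graph whose vertex set is {π(i) : i occurs in some pair of F} and whose edges are the {π(i),π(i')} for {i,i'} ∈ F; F is called connecting if its spatial projection is a connected graph. Fix s₁ ∈ S and N ≥ 1. Then, the sum being taken in [0,∞], Σ_{F connecting pairing of size N whose spatial projection contains the vertex s₁} ∏_{{i,i'}∈F} c(i,i') ≤ (1 + sup_{s∈S} Σ_{i∈π^{−1}(s)} Σ_{i'∈I, i'≠i} c(i,i'))^{3N}. -/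
open scoped ENNReal NNReal

section WickAux

variable {S I : Type}

/-- Whether a symbol (pop or edge) is allowed at stack `L`. -/
def wkSymOk (π : I → S) (L : List S) : Option (I × I) → Prop
  | none => True
  | some (i, i') => L.head? = some (π i) ∧ i' ≠ i

/-- The stack after processing a symbol. -/
def wkNext (π : I → S) (L : List S) : Option (I × I) → List S
  | none => L.tail
  | some (_, i') => π i' :: L

/-- Validity of a word with respect to DFS-stack semantics. -/
def wkOk (π : I → S) : List S → List (Option (I × I)) → Prop
  | _, [] => True
  | L, a :: w => wkSymOk π L a ∧ wkOk π (wkNext π L a) w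

/-- Weight of a symbol. -/
noncomputable def wkWt (c : I → I → ℝ≥0) : Option (I × I) → ℝ≥0∞
  | none => 1
  | some (i, i') => (c i i' : ℝ≥0∞)

/-- Weight of a word. -/
noncomputable def wkWeight (c : I → I → ℝ≥0) (w : List (Option (I × I))) : ℝ≥0∞ :=
  (w.map (wkWt c)).prod

lemma wkWeight_nil (c : I → I → ℝ≥0) : wkWeight c [] = 1 := rfl

lemma wkWeight_cons (c : I → I → ℝ≥0) (a : Option (I × I)) (w : List (Option (I × I))) :
    wkWeight c (a :: w) = wkWt c a * wkWeight c w := by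
  simp [wkWeight]

lemma wkOk_replicate (π : I → S) : ∀ (m : ℕ) (L : List S),
    wkOk π L (List.replicate m none)
  | 0, _ => trivial
  | m + 1, L => ⟨trivial, wkOk_replicate π m L.tail⟩

lemma wkOk_append_replicate (π : I → S) (m : ℕ) :
    ∀ (w : List (Option (I × I))) (L : List S), wkOk π L w →
      wkOk π L (w ++ List.replicate m none)
  | [], L, _ => wkOk_replicate π m L
  | a :: w, L, h => ⟨h.1, wkOk_append_replicate π m w _ h.2⟩

end WickAux

open Classical in
lemma wkTsum_option {β : Type*} (f : Option β → ℝ≥0∞) :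
    ∑' o : Option β, f o = f none + ∑' b : β, f (some b) := by
  have hsplit : ∀ o : Option β,
      f o = (if o = none then f none else 0) + (if o = none then 0 else f o) := by
    intro o; by_cases h : o = none <;> simp [h]
  have hsupp : Function.support (fun o : Option β => if o = none then 0 else f o)
      ⊆ Set.range Option.some := by
    intro o ho
    cases o with
    | none => simp at ho
    | some b => exact ⟨b, rfl⟩
  have h2 := (Option.some_injective β).tsum_eq
    (f := fun o : Option β => if o = none then 0 else f o) hsupp
  calc ∑' o : Option β, f o
      = ∑' o : Option β,
        ((if o = none then f none else 0) + (if o = none then 0 else f o)) :=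
        tsum_congr hsplit
    _ = (∑' o : Option β, if o = none then f none else 0)
        + ∑' o : Option β, (if o = none then 0 else f o) := ENNReal.tsum_add
    _ = f none + ∑' b : β, f (some b) := by
        congr 1
        · rw [tsum_eq_single none (fun o h => by simp [h])]
          simp
        · rw [← h2]
          simp

section WickSum

variable {S I : Type} (π : I → S) (c : I → I → ℝ≥0)

def wkAllowedEquiv (L : List S) : {a : Option (I × I) // wkSymOk π L a} ≃
    Option {p : I × I // L.head? = some (π p.1) ∧ p.2 ≠ p.1} where
  toFun a := match a with
    | ⟨none, _⟩ => none
    | ⟨some p, h⟩ => some ⟨p, h⟩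
  invFun o := match o with
    | none => ⟨none, trivial⟩
    | some ⟨p, h⟩ => ⟨some p, h⟩
  left_inv a := by match a with
    | ⟨none, _⟩ => rfl
    | ⟨some p, h⟩ => rfl
  right_inv o := by match o with
    | none => rfl
    | some ⟨p, h⟩ => rfl

lemma wkSymSum (Kb : ℝ≥0∞)
    (hK : ∀ s : S, ∑' p : {p : I × I // π p.1 = s ∧ p.2 ≠ p.1},
      ((c p.1.1 p.1.2 : ℝ≥0) : ℝ≥0∞) ≤ Kb)
    (L : List S) :
    ∑' a : {a : Option (I × I) // wkSymOk π L a}, wkWt c a.1 ≤ 1 + Kb := by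
  have he := (wkAllowedEquiv π L).symm.tsum_eq
    (f := fun a : {a : Option (I × I) // wkSymOk π L a} => wkWt c a.1)
  rw [← he, wkTsum_option]
  have h1 : wkWt c (((wkAllowedEquiv π L).symm none).1) = 1 := rfl
  rw [h1]
  have h2 : ∀ p : {p : I × I // L.head? = some (π p.1) ∧ p.2 ≠ p.1},
      wkWt c (((wkAllowedEquiv π L).symm (some p)).1) = ((c p.1.1 p.1.2 : ℝ≥0) : ℝ≥0∞) := by
    rintro ⟨⟨i, i'⟩, h⟩; rfl
  rw [tsum_congr h2]
  refine add_le_add_right ?_ 1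
  cases L with
  | nil =>
    haveI : IsEmpty {p : I × I // (List.nil (α := S)).head? = some (π p.1) ∧ p.2 ≠ p.1} := by
      constructor; rintro ⟨p, h, -⟩; simp at h
    rw [tsum_empty]; exact zero_le
  | cons s L' =>
    have hiff : ∀ p : I × I,
        ((s :: L').head? = some (π p.1) ∧ p.2 ≠ p.1) ↔ (π p.1 = s ∧ p.2 ≠ p.1) := by
      intro p; simp [eq_comm]
    have he2 := (Equiv.subtypeEquivRight hiff).symm.tsum_eq
      (f := fun p : {p : I × I // (s :: L').head? = some (π p.1) ∧ p.2 ≠ p.1} =>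
        ((c p.1.1 p.1.2 : ℝ≥0) : ℝ≥0∞))
    rw [← he2]
    exact hK s

end WickSum

section WickSum2

variable {S I : Type} (π : I → S) (c : I → I → ℝ≥0)

def wkConsEquiv (L : List S) (n : ℕ) :
    {w : List (Option (I × I)) // w.length = n + 1 ∧ wkOk π L w} ≃
    Σ a : {a : Option (I × I) // wkSymOk π L a},
      {w : List (Option (I × I)) // w.length = n ∧ wkOk π (wkNext π L a.1) w} where
  toFun := fun ⟨w, hw⟩ => match w, hw with
    | a :: w', ⟨hl, ha, hok⟩ => ⟨⟨a, ha⟩, ⟨w', by simpa using hl, hok⟩⟩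
  invFun := fun ⟨⟨a, ha⟩, ⟨w, hl, hok⟩⟩ => ⟨a :: w, by simp [hl], ha, hok⟩
  left_inv := fun ⟨w, hw⟩ => match w, hw with
    | _ :: _, ⟨_, _, _⟩ => rfl
  right_inv := fun ⟨⟨a, ha⟩, ⟨w, hl, hok⟩⟩ => rfl

lemma wkSumBound (Kb : ℝ≥0∞)
    (hK : ∀ s : S, ∑' p : {p : I × I // π p.1 = s ∧ p.2 ≠ p.1},
      ((c p.1.1 p.1.2 : ℝ≥0) : ℝ≥0∞) ≤ Kb) :
    ∀ (n : ℕ) (L : List S),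
      ∑' w : {w : List (Option (I × I)) // w.length = n ∧ wkOk π L w}, wkWeight c w.1
        ≤ (1 + Kb) ^ n := by
  intro n
  induction n with
  | zero =>
    intro L
    letI : Unique {w : List (Option (I × I)) // w.length = 0 ∧ wkOk π L w} :=
      ⟨⟨⟨[], rfl, trivial⟩⟩, fun w => Subtype.ext (List.length_eq_zero_iff.mp w.2.1)⟩
    rw [tsum_eq_single (default) (fun b hb => absurd (Subsingleton.elim b default) hb)]
    rw [pow_zero]
    exact le_of_eq rfl
  | succ n ih =>
    intro L
    rw [← (wkConsEquiv π L n).symm.tsum_eq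
      (f := fun w : {w : List (Option (I × I)) // w.length = n + 1 ∧ wkOk π L w} =>
        wkWeight c w.1)]
    have hval : ∀ x : Σ a : {a : Option (I × I) // wkSymOk π L a},
        {w : List (Option (I × I)) // w.length = n ∧ wkOk π (wkNext π L a.1) w},
        wkWeight c (((wkConsEquiv π L n).symm x).1) = wkWt c x.1.1 * wkWeight c x.2.1 := by
      rintro ⟨⟨a, ha⟩, ⟨w, hl, hok⟩⟩
      simp [wkConsEquiv, wkWeight_cons]
    calc ∑' x, wkWeight c (((wkConsEquiv π L n).symm x).1)
        = ∑' (a : {a : Option (I × I) // wkSymOk π L a})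
            (w : {w : List (Option (I × I)) // w.length = n ∧ wkOk π (wkNext π L a.1) w}),
            wkWt c a.1 * wkWeight c w.1 := by
          rw [tsum_congr hval, ENNReal.tsum_sigma']
      _ ≤ ∑' a : {a : Option (I × I) // wkSymOk π L a}, wkWt c a.1 * (1 + Kb) ^ n := by
          refine Summable.tsum_le_tsum (fun a => ?_) ENNReal.summable ENNReal.summable
          rw [ENNReal.tsum_mul_left]
          exact mul_le_mul_right (ih (wkNext π L a.1)) _
      _ = (∑' a : {a : Option (I × I) // wkSymOk π L a}, wkWt c a.1) * (1 + Kb) ^ n :=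
          ENNReal.tsum_mul_right
      _ ≤ (1 + Kb) * (1 + Kb) ^ n := mul_le_mul_left (wkSymSum π c Kb hK L) _
      _ = (1 + Kb) ^ (n + 1) := (pow_succ' (1 + Kb) n).symm

end WickSum2

section WickGraph

open scoped Classical

variable {S I : Type} (π : I → S)

lemma wkSym2_exists_mem {α : Type*} (e : Sym2 α) : ∃ i, i ∈ e :=
  Sym2.inductionOn e fun x y => ⟨x, Sym2.mem_mk_left x y⟩

lemma wkReachSupEdge {V : Type} {H : SimpleGraph V} {a b v t : V}
    (h : (H ⊔ SimpleGraph.fromEdgeSet {s(a, b)}).Reachable v t) :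
    H.Reachable v t ∨ H.Reachable v a ∨ H.Reachable v b := by
  obtain ⟨p⟩ := h
  induction p with
  | nil => exact Or.inl (SimpleGraph.Reachable.refl _)
  | cons hadj p ih =>
    rw [SimpleGraph.sup_adj] at hadj
    rcases hadj with hH | hE
    · rcases ih with h' | h' | h'
      · exact Or.inl (hH.reachable.trans h')
      · exact Or.inr (Or.inl (hH.reachable.trans h'))
      · exact Or.inr (Or.inr (hH.reachable.trans h'))
    · rw [SimpleGraph.fromEdgeSet_adj, Set.mem_singleton_iff, Sym2.eq_iff] at hE
      rcases hE.1 with ⟨rfl, rfl⟩ | ⟨rfl, rfl⟩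
      · exact Or.inr (Or.inl (SimpleGraph.Reachable.refl _))
      · exact Or.inr (Or.inr (SimpleGraph.Reachable.refl _))

lemma wkReachErase (F : Finset (Sym2 I)) (e : Sym2 I) (he : e ∈ F) (i j : I)
    (hej : e = s(i, j)) {v t : S}
    (h : (SimpleGraph.fromEdgeSet (Sym2.map π '' (F : Set (Sym2 I)))).Reachable v t) :
    (SimpleGraph.fromEdgeSet (Sym2.map π '' ((F.erase e) : Set (Sym2 I)))).Reachable v t ∨
    (SimpleGraph.fromEdgeSet (Sym2.map π '' ((F.erase e) : Set (Sym2 I)))).Reachable v (π i) ∨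
    (SimpleGraph.fromEdgeSet (Sym2.map π '' ((F.erase e) : Set (Sym2 I)))).Reachable v (π j) := by
  have hsub : Sym2.map π '' (F : Set (Sym2 I)) ⊆
      (Sym2.map π '' ((F.erase e) : Set (Sym2 I))) ∪ {s(π i, π j)} := by
    rintro x ⟨e', he', rfl⟩
    by_cases hee : e' = e
    · right
      rw [hee, hej, Sym2.map_pair_eq]
      rfl
    · exact Or.inl ⟨e', by simp [Finset.mem_erase, hee, he'], rfl⟩
  have hle : SimpleGraph.fromEdgeSet (Sym2.map π '' (F : Set (Sym2 I))) ≤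
      SimpleGraph.fromEdgeSet (Sym2.map π '' ((F.erase e) : Set (Sym2 I))) ⊔
        SimpleGraph.fromEdgeSet {s(π i, π j)} := by
    rw [← SimpleGraph.fromEdgeSet_union]
    exact SimpleGraph.fromEdgeSet_mono hsub
  exact wkReachSupEdge (h.mono hle)

lemma wkReachIsolated (F : Finset (Sym2 I)) (s' : S)
    (hno : ¬ ∃ e ∈ F, ∃ i ∈ e, π i = s') {v : S}
    (hr : (SimpleGraph.fromEdgeSet (Sym2.map π '' (F : Set (Sym2 I)))).Reachable v s') :
    v = s' := by
  obtain ⟨p⟩ := hr.symm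
  cases p with
  | nil => rfl
  | cons hadj _ =>
    exfalso
    rw [SimpleGraph.fromEdgeSet_adj] at hadj
    obtain ⟨⟨e, he, heq⟩, -⟩ := hadj
    have hmem : s' ∈ Sym2.map π e := by
      rw [heq]; exact Sym2.mem_mk_left _ _
    obtain ⟨i, hi, hpi⟩ := Sym2.mem_map.mp hmem
    exact hno ⟨e, he, i, hi, hpi⟩

lemma wkPermErase (F : Finset (Sym2 I)) (e : Sym2 I) (he : e ∈ F) :
    F.toList.Perm (e :: (F.erase e).toList) := by
  rw [← Multiset.coe_eq_coe, ← Multiset.cons_coe, Finset.coe_toList, Finset.coe_toList,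
    Finset.erase_val]
  exact (Multiset.cons_erase (Finset.mem_def.mp he)).symm

end WickGraph

section WickExists

open scoped Classical

variable {S I : Type} (π : I → S)

lemma wkExists : ∀ (m : ℕ) (F : Finset (Sym2 I)) (L : List S),
    2 * F.card + L.length ≤ m →
    (∀ e ∈ F, ¬ e.IsDiag) →
    (∀ e ∈ F, ∀ v : S, (∃ i ∈ e, π i = v) →
      ∃ t ∈ L, (SimpleGraph.fromEdgeSet (Sym2.map π '' (F : Set (Sym2 I)))).Reachable v t) →
    ∃ w : List (Option (I × I)), wkOk π L w ∧ w.length = 2 * F.card + L.length ∧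
      ((w.filterMap id).map Sym2.mk.uncurry).Perm F.toList := by
  intro m
  induction m with
  | zero =>
    intro F L hm _ _
    have hF : F = ∅ := Finset.card_eq_zero.mp (by omega)
    have hL : L = [] := List.length_eq_zero_iff.mp (by omega)
    exact ⟨[], trivial, by simp [hF, hL], by simp [hF]⟩
  | succ m IH =>
    intro F L hm hdiag hreach
    cases L with
    | nil =>
      have hF : F = ∅ := by
        by_contra hne
        obtain ⟨e, he⟩ := Finset.nonempty_of_ne_empty hne
        obtain ⟨i, hi⟩ := wkSym2_exists_mem e
        obtain ⟨t, ht, -⟩ := hreach e he (π i) ⟨i, hi, rfl⟩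
        simp at ht
      exact ⟨[], trivial, by simp [hF], by simp [hF]⟩
    | cons s L' =>
      by_cases hs : ∃ e ∈ F, ∃ i ∈ e, π i = s
      · obtain ⟨e, he, i, hie, hpi⟩ := hs
        obtain ⟨j, hej⟩ := Sym2.mem_iff_exists.mp hie
        have hji : j ≠ i := by
          intro h
          exact hdiag e he (by rw [hej, h]; exact Sym2.mk_isDiag_iff.mpr rfl)
        have hcard : (F.erase e).card = F.card - 1 := Finset.card_erase_of_mem he
        have hpos : 1 ≤ F.card := Finset.card_pos.mpr ⟨e, he⟩
        have hdiag' : ∀ e' ∈ F.erase e, ¬ e'.IsDiag := fun e' he' =>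
          hdiag e' (Finset.mem_of_mem_erase he')
        have hreach' : ∀ e' ∈ F.erase e, ∀ v : S, (∃ i' ∈ e', π i' = v) →
            ∃ t ∈ (π j :: s :: L'),
              (SimpleGraph.fromEdgeSet
                (Sym2.map π '' ((F.erase e) : Set (Sym2 I)))).Reachable v t := by
          intro e' he' v hv
          obtain ⟨t, ht, hr⟩ := hreach e' (Finset.mem_of_mem_erase he') v hv
          rcases wkReachErase π F e he i j hej hr with h1 | h1 | h1
          · exact ⟨t, List.mem_cons_of_mem _ ht, h1⟩
          · exact ⟨s, by simp, hpi ▸ h1⟩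
          · exact ⟨π j, by simp, h1⟩
        obtain ⟨w', hok', hlen', hperm'⟩ := IH (F.erase e) (π j :: s :: L')
          (by simp only [hcard, List.length_cons] at *; omega) hdiag' hreach'
        refine ⟨some (i, j) :: w', ⟨⟨?_, hji⟩, hok'⟩, ?_, ?_⟩
        · simp [hpi]
        · simp only [List.length_cons, hlen', hcard, List.length_cons] at *
          omega
        · have h1 : ((some (i, j) :: w').filterMap id).map Sym2.mk.uncurry
              = s(i, j) :: ((w'.filterMap id).map Sym2.mk.uncurry) := by simp
          rw [h1]
          refine List.Perm.trans ?_ (wkPermErase F e he).symm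
          rw [hej] at hperm' ⊢
          exact hperm'.cons _
      · have hreach'' : ∀ e ∈ F, ∀ v : S, (∃ i ∈ e, π i = v) →
            ∃ t ∈ L',
              (SimpleGraph.fromEdgeSet
                (Sym2.map π '' (F : Set (Sym2 I)))).Reachable v t := by
          intro e he v hv
          obtain ⟨t, ht, hr⟩ := hreach e he v hv
          rcases List.mem_cons.mp ht with rfl | htL'
          · exfalso
            have hv' := wkReachIsolated π F t hs hr
            subst hv'
            obtain ⟨i, hi, hpi⟩ := hv
            exact hs ⟨e, he, i, hi, hpi⟩
          · exact ⟨t, htL', hr⟩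
        obtain ⟨w', hok', hlen', hperm'⟩ := IH F L'
          (by simp only [List.length_cons] at hm; omega) hdiag hreach''
        refine ⟨none :: w', ⟨trivial, hok'⟩, ?_, ?_⟩
        · simp only [List.length_cons, hlen']
          omega
        · simpa using hperm'

end WickExists

lemma wkWeight_filterMap {S I : Type} (π : I → S) (c : I → I → ℝ≥0) :
    ∀ w : List (Option (I × I)),
      wkWeight c w
        = ((w.filterMap id).map (fun p : I × I => ((c p.1 p.2 : ℝ≥0) : ℝ≥0∞))).prod
  | [] => rfl
  | none :: w => by
      rw [wkWeight_cons]
      rw [List.filterMap_cons_none (f := id) (a := (none : Option (I × I))) (l := w) rfl]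
      rw [← wkWeight_filterMap π c w]
      simp [wkWt]
  | some p :: w => by
      rw [wkWeight_cons]
      rw [List.filterMap_cons_some (f := id) (a := some p) (l := w) (b := p) rfl]
      rw [List.map_cons, List.prod_cons, ← wkWeight_filterMap π c w]
      rfl

lemma wkFilterMap_replicate_none {I : Type} (m : ℕ) :
    (List.replicate m (none : Option (I × I))).filterMap id = [] := by
  induction m with
  | zero => rfl
  | succ m ih => simpa [List.replicate_succ] using ih

/-- Wick bound with spatial structure: `S` countable, `π : I → S` with finite fibers,
`c : I×I → [0,∞)` a symmetric kernel.  The sum (in `[0,∞]`), over all partial pairings `F`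
of `I` of size `N` whose spatial projection is connected and contains the vertex `s₁`, of
the products `∏_{{i,i'}∈F} c(i,i')`, is at most
`(1 + sup_s Σ_{i∈π⁻¹(s)} Σ_{i'≠i} c(i,i'))^{3N}`. -/
theorem wick_bound_spatial_structure
    {S I : Type} [Countable S]
    (π : I → S) (hfib : ∀ s : S, (π ⁻¹' {s}).Finite)
    (c : I → I → ℝ≥0) (hc : ∀ i i', c i i' = c i' i)
    (s₁ : S) (N : ℕ) (hN : 1 ≤ N) :
    ∑' F : {F : Finset (Sym2 I) //
        (∀ e ∈ F, ¬ e.IsDiag) ∧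
        (∀ e ∈ F, ∀ e' ∈ F, e ≠ e' → ∀ i : I, i ∈ e → i ∉ e') ∧
        F.card = N ∧
        (∃ e ∈ F, ∃ i ∈ e, π i = s₁) ∧
        (∀ s s' : S, (∃ e ∈ F, ∃ i ∈ e, π i = s) → (∃ e ∈ F, ∃ i ∈ e, π i = s') →
          (SimpleGraph.fromEdgeSet (Sym2.map π '' (F : Set (Sym2 I)))).Reachable s s')},
      ∏ e ∈ F.1,
        Sym2.lift ⟨fun i i' => ((c i i' : ℝ≥0) : ℝ≥0∞),
          fun i i' => by simp [hc i i']⟩ e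
    ≤ (1 + ⨆ s : S, ∑' (i : ↥(π ⁻¹' {s})) (i' : {i' : I // i' ≠ (i : I)}),
        ((c (i : I) (i' : I) : ℝ≥0) : ℝ≥0∞)) ^ (3 * N) := by
  set T := {F : Finset (Sym2 I) //
        (∀ e ∈ F, ¬ e.IsDiag) ∧
        (∀ e ∈ F, ∀ e' ∈ F, e ≠ e' → ∀ i : I, i ∈ e → i ∉ e') ∧
        F.card = N ∧
        (∃ e ∈ F, ∃ i ∈ e, π i = s₁) ∧
        (∀ s s' : S, (∃ e ∈ F, ∃ i ∈ e, π i = s) → (∃ e ∈ F, ∃ i ∈ e, π i = s') →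
          (SimpleGraph.fromEdgeSet (Sym2.map π '' (F : Set (Sym2 I)))).Reachable s s')} with hT
  set K : ℝ≥0∞ := ⨆ s : S, ∑' (i : ↥(π ⁻¹' {s})) (i' : {i' : I // i' ≠ (i : I)}),
        ((c (i : I) (i' : I) : ℝ≥0) : ℝ≥0∞) with hKdef
  -- the per-vertex bound
  have hK : ∀ s : S, ∑' p : {p : I × I // π p.1 = s ∧ p.2 ≠ p.1},
      ((c p.1.1 p.1.2 : ℝ≥0) : ℝ≥0∞) ≤ K := by
    intro s
    let hEs : {p : I × I // π p.1 = s ∧ p.2 ≠ p.1} ≃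
        Σ i : ↥(π ⁻¹' {s}), {i' : I // i' ≠ (i : I)} :=
      { toFun := fun p => ⟨⟨p.1.1, p.2.1⟩, ⟨p.1.2, p.2.2⟩⟩
        invFun := fun x => ⟨(x.1.1, x.2.1), ⟨x.1.2, x.2.2⟩⟩
        left_inv := fun p => rfl
        right_inv := fun x => rfl }
    have h1 := hEs.symm.tsum_eq
      (f := fun p : {p : I × I // π p.1 = s ∧ p.2 ≠ p.1} =>
        ((c p.1.1 p.1.2 : ℝ≥0) : ℝ≥0∞))
    rw [← h1]
    have h2 : ∑' x : Σ i : ↥(π ⁻¹' {s}), {i' : I // i' ≠ (i : I)},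
        ((c ((hEs.symm x).1.1) ((hEs.symm x).1.2) : ℝ≥0) : ℝ≥0∞)
        = ∑' (i : ↥(π ⁻¹' {s})) (i' : {i' : I // i' ≠ (i : I)}),
          ((c (i : I) (i' : I) : ℝ≥0) : ℝ≥0∞) := by
      rw [← ENNReal.tsum_sigma]
      exact tsum_congr (fun x => rfl)
    rw [h2]
    exact le_iSup (fun s : S => ∑' (i : ↥(π ⁻¹' {s})) (i' : {i' : I // i' ≠ (i : I)}),
      ((c (i : I) (i' : I) : ℝ≥0) : ℝ≥0∞)) s
  -- a valid word for each connecting pairing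
  have hword : ∀ F : T, ∃ w : List (Option (I × I)),
      (w.length = 3 * N ∧ wkOk π [s₁] w) ∧
      ((w.filterMap id).map Sym2.mk.uncurry).Perm F.1.toList := by
    rintro ⟨F, hdiag, hdisj, hcard, hanchor, hconn⟩
    have hreach : ∀ e ∈ F, ∀ v : S, (∃ i ∈ e, π i = v) →
        ∃ t ∈ [s₁],
          (SimpleGraph.fromEdgeSet (Sym2.map π '' (F : Set (Sym2 I)))).Reachable v t := by
      intro e he v hv
      obtain ⟨i, hi, hpi⟩ := hv
      exact ⟨s₁, List.mem_singleton.mpr rfl, hconn v s₁ ⟨e, he, i, hi, hpi⟩ hanchor⟩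
    obtain ⟨w₀, hok₀, hlen₀, hperm₀⟩ :=
      wkExists π (2 * F.card + 1) F [s₁] (le_refl _) hdiag hreach
    refine ⟨w₀ ++ List.replicate (3 * N - (2 * N + 1)) none, ⟨?_, ?_⟩, ?_⟩
    · simp only [List.length_append, hlen₀, List.length_replicate, hcard,
        List.length_singleton]
      omega
    · exact wkOk_append_replicate π _ w₀ [s₁] hok₀
    · rw [List.filterMap_append, wkFilterMap_replicate_none, List.append_nil]
      exact hperm₀
  -- the injection into words
  let W := {w : List (Option (I × I)) // w.length = 3 * N ∧ wkOk π [s₁] w}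
  let Φ : T → W := fun F => ⟨Classical.choose (hword F), (Classical.choose_spec (hword F)).1⟩
  have hΦperm : ∀ F : T, (((Φ F).1.filterMap id).map Sym2.mk.uncurry).Perm F.1.toList :=
    fun F => (Classical.choose_spec (hword F)).2
  have hΦinj : Function.Injective Φ := by
    intro F F' h
    have h1 : (Φ F).1 = (Φ F').1 := congrArg Subtype.val h
    have h2 : F.1.toList.Perm F'.1.toList :=
      ((hΦperm F).symm.trans (h1 ▸ hΦperm F'))
    have h3 : F.1.val = F'.1.val := by
      rw [← Finset.coe_toList, ← Finset.coe_toList, Multiset.coe_eq_coe]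
      exact h2
    exact Subtype.ext (Finset.val_injective h3)
  -- weights agree
  have hΦweight : ∀ F : T,
      (∏ e ∈ F.1, Sym2.lift ⟨fun i i' => ((c i i' : ℝ≥0) : ℝ≥0∞),
        fun i i' => by simp [hc i i']⟩ e) = wkWeight c (Φ F).1 := by
    intro F
    set cl : Sym2 I → ℝ≥0∞ := Sym2.lift ⟨fun i i' => ((c i i' : ℝ≥0) : ℝ≥0∞),
        fun i i' => by simp [hc i i']⟩ with hcl
    rw [wkWeight_filterMap π c]
    have h1 : (fun p : I × I => ((c p.1 p.2 : ℝ≥0) : ℝ≥0∞)) = cl ∘ Sym2.mk.uncurry := by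
      funext p
      obtain ⟨a, b⟩ := p
      rfl
    rw [h1, ← List.map_map, List.Perm.prod_eq ((hΦperm F).map cl)]
    rw [← Finset.prod_map_toList]
  -- put everything together
  calc ∑' F : T, ∏ e ∈ F.1, Sym2.lift ⟨fun i i' => ((c i i' : ℝ≥0) : ℝ≥0∞),
        fun i i' => by simp [hc i i']⟩ e
      = ∑' F : T, wkWeight c (Φ F).1 := tsum_congr hΦweight
    _ ≤ ∑' w : W, wkWeight c w.1 :=
        ENNReal.tsum_comp_le_tsum_of_injective hΦinj (fun w : W => wkWeight c w.1)
    _ ≤ (1 + K) ^ (3 * N) := wkSumBound π c K hK (3 * N) [s₁]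
end
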